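/- arXiv:2405.04242 — 4 statements merged into one kernel-verified Lean document; each statement's English description precedes it below -/
import Mathlib

section
/- Let β ≥ 1, γ ∈ (0,1] with γβ > 1, c > 0, H₁, H₂ ∈ (0,1] and T₁, T₂ > 0. Then for every ε > 0 one has ∫₀^ε ( ln ∏_{i=1,2} ( T_i 2^{1/H_i} c^{1/(γ H_i)} / (2 u^{1/(γ H_i)}) + 1 ) )^{1/β} du ≤ c₁ ε^{1 − 1/(γβ)}, where c₁ = (2^{1/β} c^{1/(γβ)} / (1 − 1/(γβ))) · Σ_{i=1,2} (1/H_i) (T_i/2)^{H_i/β}. -/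
open MeasureTheory Real Set

lemma aux_add_rpow (x y p : ℝ) (hx : 0 ≤ x) (hy : 0 ≤ y) (hp : 0 ≤ p) (hp1 : p ≤ 1) :
    (x + y) ^ p ≤ x ^ p + y ^ p := by
  lift x to NNReal using hx
  lift y to NNReal using hy
  exact_mod_cast NNReal.rpow_add_le_add_rpow x y hp hp1

lemma aux_log (x H : ℝ) (hx : 0 ≤ x) (hH : 0 < H) (hH1 : H ≤ 1) :
    Real.log (x + 1) ≤ x ^ H / H := by
  have h1 : (x + 1) ^ H ≤ x ^ H + 1 := by
    simpa using aux_add_rpow x 1 H hx zero_le_one hH.le hH1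
  have h2 : Real.log ((x + 1) ^ H) = H * Real.log (x + 1) := Real.log_rpow (by linarith) H
  have h3 : Real.log ((x + 1) ^ H) ≤ Real.log (x ^ H + 1) :=
    Real.log_le_log (by positivity) h1
  have h4 : Real.log (x ^ H + 1) ≤ x ^ H := by
    have := Real.log_le_sub_one_of_pos (x := x ^ H + 1) (by positivity)
    linarith
  rw [h2] at h3
  rw [le_div_iff₀ hH]
  nlinarith

lemma factor_bound (β γ c H T u : ℝ) (hβ : 1 ≤ β) (hγ0 : 0 < γ)
    (hc : 0 < c) (hH : 0 < H) (hH1 : H ≤ 1) (hT : 0 < T) (hu : 0 < u) :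
    (Real.log (T * 2 ^ (1/H) * c ^ (1/(γ*H)) / (2 * u ^ (1/(γ*H))) + 1)) ^ (1/β) ≤
      (1/H) * (T/2) ^ (H/β) * (2 ^ (1/β) * c ^ (1/(γ*β)) * u ^ (-(1/(γ*β)))) := by
  have hβ0 : 0 < β := lt_of_lt_of_le one_pos hβ
  have hβinv0 : 0 ≤ 1/β := by positivity
  have hβinv1 : 1/β ≤ 1 := by rw [div_le_one hβ0]; exact hβ
  have hua : 0 < u ^ (1/(γ*H)) := rpow_pos_of_pos hu _
  set x : ℝ := T * 2 ^ (1/H) * c ^ (1/(γ*H)) / (2 * u ^ (1/(γ*H))) with hxdef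
  have hx : 0 < x := by positivity
  have step2 : (Real.log (x + 1)) ^ (1/β) ≤ (x ^ H / H) ^ (1/β) :=
    Real.rpow_le_rpow (Real.log_nonneg (by linarith)) (aux_log x H hx.le hH hH1) hβinv0
  have step3 : (x ^ H / H) ^ (1/β) = x ^ (H/β) / H ^ (1/β) := by
    rw [Real.div_rpow (by positivity) hH.le, ← Real.rpow_mul hx.le, mul_one_div]
  have step4 : H ≤ H ^ (1/β) := by
    have := Real.rpow_le_rpow_of_exponent_ge hH hH1 hβinv1
    simpa using this
  have step5 : x ^ (H/β) / H ^ (1/β) ≤ x ^ (H/β) / H := by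
    gcongr
  have hxeq : x = (T/2) * 2 ^ (1/H) * c ^ (1/(γ*H)) * u ^ (-(1/(γ*H))) := by
    rw [Real.rpow_neg hu.le]
    rw [hxdef]; ring
  have e1 : (1/H) * (H/β) = 1/β := by field_simp
  have e2 : (1/(γ*H)) * (H/β) = 1/(γ*β) := by field_simp
  have e3 : (-(1/(γ*H))) * (H/β) = -(1/(γ*β)) := by field_simp
  have step6 : x ^ (H/β) =
      (T/2) ^ (H/β) * 2 ^ (1/β) * c ^ (1/(γ*β)) * u ^ (-(1/(γ*β))) := by
    rw [hxeq, Real.mul_rpow (by positivity) (by positivity),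
      Real.mul_rpow (by positivity) (by positivity),
      Real.mul_rpow (by positivity) (by positivity),
      ← Real.rpow_mul (by norm_num : (0:ℝ) ≤ 2), ← Real.rpow_mul hc.le,
      ← Real.rpow_mul hu.le, e1, e2, e3]
  calc (Real.log (x + 1)) ^ (1/β) ≤ x ^ (H/β) / H ^ (1/β) := step3 ▸ step2
    _ ≤ x ^ (H/β) / H := step5
    _ = (1/H) * (T/2) ^ (H/β) * (2 ^ (1/β) * c ^ (1/(γ*β)) * u ^ (-(1/(γ*β)))) := by
        rw [step6]; ring

/-- the entropy-integral bound
`∫₀^ε (ln ∏ᵢ (Tᵢ 2^{1/Hᵢ} c^{1/(γHᵢ)}/(2u^{1/(γHᵢ)}) + 1))^{1/β} du ≤ c₁ ε^{1 − 1/(γβ)}`. -/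
theorem stmt2 (β γ c H₁ H₂ T₁ T₂ : ℝ)
    (hβ : 1 ≤ β) (hγ : γ ∈ Set.Ioc (0:ℝ) 1) (hγβ : 1 < γ * β)
    (hc : 0 < c) (hH₁ : H₁ ∈ Set.Ioc (0:ℝ) 1) (hH₂ : H₂ ∈ Set.Ioc (0:ℝ) 1)
    (hT₁ : 0 < T₁) (hT₂ : 0 < T₂) :
    ∀ ε : ℝ, 0 < ε →
      ∫⁻ u in Set.Ioo (0:ℝ) ε,
          ENNReal.ofReal
            ((Real.log ((T₁ * 2 ^ (1/H₁) * c ^ (1/(γ*H₁)) / (2 * u ^ (1/(γ*H₁))) + 1) *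
              (T₂ * 2 ^ (1/H₂) * c ^ (1/(γ*H₂)) / (2 * u ^ (1/(γ*H₂))) + 1))) ^ (1/β)) ≤
        ENNReal.ofReal ((2 ^ (1/β) * c ^ (1/(γ*β)) / (1 - 1/(γ*β)) *
          ((1/H₁) * (T₁/2) ^ (H₁/β) + (1/H₂) * (T₂/2) ^ (H₂/β))) * ε ^ (1 - 1/(γ*β))) := by
  intro ε hε
  obtain ⟨hγ0, hγ1⟩ := hγ
  obtain ⟨hH₁0, hH₁1⟩ := hH₁
  obtain ⟨hH₂0, hH₂1⟩ := hH₂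
  have hβ0 : 0 < β := lt_of_lt_of_le one_pos hβ
  have hγβ0 : 0 < γ * β := by positivity
  have hβinv0 : 0 ≤ 1/β := by positivity
  have hβinv1 : 1/β ≤ 1 := by rw [div_le_one hβ0]; exact hβ
  set r : ℝ := -(1/(γ*β)) with hrdef
  have hr : -1 < r := by
    have : 1/(γ*β) < 1 := by rw [div_lt_one hγβ0]; linarith
    simp only [hrdef]; linarith
  have hr1 : 0 < r + 1 := by linarith
  set K : ℝ := 2 ^ (1/β) * c ^ (1/(γ*β)) *
      ((1/H₁) * (T₁/2) ^ (H₁/β) + (1/H₂) * (T₂/2) ^ (H₂/β)) with hKdef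
  have hK : 0 ≤ K := by positivity
  -- pointwise bound
  have hpt : ∀ u ∈ Set.Ioo (0:ℝ) ε,
      ENNReal.ofReal
        ((Real.log ((T₁ * 2 ^ (1/H₁) * c ^ (1/(γ*H₁)) / (2 * u ^ (1/(γ*H₁))) + 1) *
          (T₂ * 2 ^ (1/H₂) * c ^ (1/(γ*H₂)) / (2 * u ^ (1/(γ*H₂))) + 1))) ^ (1/β)) ≤
        ENNReal.ofReal (K * u ^ r) := by
    intro u hu
    obtain ⟨hu0, _⟩ := hu
    have hua₁ : 0 < u ^ (1/(γ*H₁)) := rpow_pos_of_pos hu0 _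
    have hua₂ : 0 < u ^ (1/(γ*H₂)) := rpow_pos_of_pos hu0 _
    set P₁ : ℝ := T₁ * 2 ^ (1/H₁) * c ^ (1/(γ*H₁)) / (2 * u ^ (1/(γ*H₁))) + 1 with hP₁
    set P₂ : ℝ := T₂ * 2 ^ (1/H₂) * c ^ (1/(γ*H₂)) / (2 * u ^ (1/(γ*H₂))) + 1 with hP₂
    have hP₁1 : 1 ≤ P₁ := by rw [hP₁]; nlinarith [div_pos (by positivity : (0:ℝ) < T₁ * 2 ^ (1/H₁) * c ^ (1/(γ*H₁))) (by positivity : (0:ℝ) < 2 * u ^ (1/(γ*H₁)))]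
    have hP₂1 : 1 ≤ P₂ := by rw [hP₂]; nlinarith [div_pos (by positivity : (0:ℝ) < T₂ * 2 ^ (1/H₂) * c ^ (1/(γ*H₂))) (by positivity : (0:ℝ) < 2 * u ^ (1/(γ*H₂)))]
    have hlogmul : Real.log (P₁ * P₂) = Real.log P₁ + Real.log P₂ :=
      Real.log_mul (by linarith) (by linarith)
    have hsub : (Real.log (P₁ * P₂)) ^ (1/β) ≤
        (Real.log P₁) ^ (1/β) + (Real.log P₂) ^ (1/β) := by
      rw [hlogmul]
      exact aux_add_rpow _ _ _ (Real.log_nonneg hP₁1) (Real.log_nonneg hP₂1) hβinv0 hβinv1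
    have hb₁ := factor_bound β γ c H₁ T₁ u hβ hγ0 hc hH₁0 hH₁1 hT₁ hu0
    have hb₂ := factor_bound β γ c H₂ T₂ u hβ hγ0 hc hH₂0 hH₂1 hT₂ hu0
    apply ENNReal.ofReal_le_ofReal
    calc (Real.log (P₁ * P₂)) ^ (1/β)
        ≤ (Real.log P₁) ^ (1/β) + (Real.log P₂) ^ (1/β) := hsub
      _ ≤ (1/H₁) * (T₁/2) ^ (H₁/β) * (2 ^ (1/β) * c ^ (1/(γ*β)) * u ^ (-(1/(γ*β)))) +
          (1/H₂) * (T₂/2) ^ (H₂/β) * (2 ^ (1/β) * c ^ (1/(γ*β)) * u ^ (-(1/(γ*β)))) :=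
            add_le_add hb₁ hb₂
      _ = K * u ^ r := by rw [hKdef, hrdef]; ring
  -- integrability of the majorant
  have hint : IntegrableOn (fun u : ℝ => K * u ^ r) (Set.Ioo 0 ε) volume := by
    have h1 : IntervalIntegrable (fun u : ℝ => u ^ r) volume 0 ε :=
      intervalIntegral.intervalIntegrable_rpow' hr
    have h2 : IntegrableOn (fun u : ℝ => u ^ r) (Set.Ioc 0 ε) volume := by
      rwa [intervalIntegrable_iff_integrableOn_Ioc_of_le hε.le] at h1
    exact (h2.mono_set Set.Ioo_subset_Ioc_self).const_mul K
  calc ∫⁻ u in Set.Ioo (0:ℝ) ε,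
          ENNReal.ofReal
            ((Real.log ((T₁ * 2 ^ (1/H₁) * c ^ (1/(γ*H₁)) / (2 * u ^ (1/(γ*H₁))) + 1) *
              (T₂ * 2 ^ (1/H₂) * c ^ (1/(γ*H₂)) / (2 * u ^ (1/(γ*H₂))) + 1))) ^ (1/β))
      ≤ ∫⁻ u in Set.Ioo (0:ℝ) ε, ENNReal.ofReal (K * u ^ r) :=
        setLIntegral_mono' measurableSet_Ioo hpt
    _ = ENNReal.ofReal (∫ u in Set.Ioo (0:ℝ) ε, K * u ^ r) := by
        rw [ofReal_integral_eq_lintegral_ofReal hint]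
        filter_upwards [ae_restrict_mem measurableSet_Ioo] with u hu
        have : (0:ℝ) < u := hu.1
        positivity
    _ = ENNReal.ofReal (K * (ε ^ (r + 1) / (r + 1))) := by
        congr 1
        rw [integral_const_mul]
        congr 1
        rw [← MeasureTheory.integral_Ioc_eq_integral_Ioo,
          ← intervalIntegral.integral_of_le hε.le, integral_rpow (Or.inl hr),
          Real.zero_rpow (by linarith), sub_zero]
    _ = ENNReal.ofReal ((2 ^ (1/β) * c ^ (1/(γ*β)) / (1 - 1/(γ*β)) *
          ((1/H₁) * (T₁/2) ^ (H₁/β) + (1/H₂) * (T₂/2) ^ (H₂/β))) * ε ^ (1 - 1/(γ*β))) := by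
        congr 1
        have he : r + 1 = 1 - 1/(γ*β) := by rw [hrdef]; ring
        rw [hKdef, he]
        ring
end

section
/- For every H ∈ (0,1/2] and all 0 ≤ s ≤ t, ∫_ℝ ((1 − exp(−2 s ξ²)) / (2 ξ²)) · (1 − exp(−(t−s) ξ²))² · |ξ|^{1−2H} dξ ≤ c_{2,H} (t−s)^H, where c_{2,H} = (1/2) ∫_ℝ (1 − exp(−u²))² |u|^{−1−2H} du < ∞. -/
open MeasureTheory Real Set



-- auxiliary: 1 - exp(-a) ≤ a  and  bounds
lemma one_sub_exp_neg_le (a : ℝ) : 1 - Real.exp (-a) ≤ a := by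
  have := Real.add_one_le_exp (-a); linarith

lemma one_sub_exp_neg_nonneg {a : ℝ} (ha : 0 ≤ a) : 0 ≤ 1 - Real.exp (-a) := by
  have : Real.exp (-a) ≤ 1 := Real.exp_le_one_iff.mpr (by linarith)
  linarith

lemma one_sub_exp_neg_le_one {a : ℝ} (ha : 0 ≤ a) : 1 - Real.exp (-a) ≤ 1 := by
  have := Real.exp_pos (-a); linarith

lemma integrable_aux (H : ℝ) (h0 : 0 < H) (h2 : H ≤ 1/2) :
    Integrable (fun u : ℝ => (1 - Real.exp (-u^2))^2 * |u| ^ (-1 - 2*H)) := by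
  set f : ℝ → ℝ := fun u => (1 - Real.exp (-u^2))^2 * |u| ^ (-1 - 2*H) with hf
  have hmeas : Measurable f := by fun_prop
  have hnn : ∀ u, 0 ≤ f u := by
    intro u
    exact mul_nonneg (sq_nonneg _) (Real.rpow_nonneg (abs_nonneg _) _)
  -- integrable on Ioi 0
  have hIoi : IntegrableOn f (Ioi 0) := by
    have hsplit : Ioo (0:ℝ) 1 ∪ Ici 1 = Ioi 0 := Ioo_union_Ici_eq_Ioi one_pos
    rw [← hsplit, integrableOn_union]
    constructor
    · -- on Ioo 0 1, bound by x ^ (1 - 2H)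
      have hbound : IntegrableOn (fun x : ℝ => x ^ (1 - 2*H)) (Ioo 0 1) :=
        (intervalIntegral.integrableOn_Ioo_rpow_iff one_pos).mpr (by linarith)
      refine Integrable.mono' hbound (hmeas.aestronglyMeasurable.restrict) ?_
      filter_upwards [ae_restrict_mem measurableSet_Ioo] with x hx
      obtain ⟨hx0, hx1⟩ := hx
      rw [Real.norm_eq_abs, abs_of_nonneg (hnn x)]; simp only [hf]; rw [abs_of_pos hx0]
      have h1 : (1 - Real.exp (-x^2))^2 ≤ x^2 := by
        have ha : 1 - Real.exp (-x^2) ≤ x^2 := one_sub_exp_neg_le _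
        have hb : 1 - Real.exp (-x^2) ≤ 1 := one_sub_exp_neg_le_one (sq_nonneg x)
        have hc : 0 ≤ 1 - Real.exp (-x^2) := one_sub_exp_neg_nonneg (sq_nonneg x)
        calc (1 - Real.exp (-x^2))^2 = (1 - Real.exp (-x^2)) * (1 - Real.exp (-x^2)) := sq _
          _ ≤ x^2 * 1 := mul_le_mul ha hb hc (sq_nonneg x)
          _ = x^2 := mul_one _
      calc (1 - Real.exp (-x^2))^2 * x ^ (-1 - 2*H)
          ≤ x^2 * x ^ (-1 - 2*H) :=
            mul_le_mul_of_nonneg_right h1 (Real.rpow_nonneg hx0.le _)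
        _ = x ^ (1 - 2*H) := by
            rw [← Real.rpow_natCast x 2, ← Real.rpow_add hx0]
            norm_num
            ring_nf
    · -- on Ici 1, bound by x ^ (-1 - 2H)
      rw [integrableOn_Ici_iff_integrableOn_Ioi]
      have hbound : IntegrableOn (fun x : ℝ => x ^ (-1 - 2*H)) (Ioi 1) :=
        integrableOn_Ioi_rpow_of_lt (by linarith) one_pos
      refine Integrable.mono' hbound (hmeas.aestronglyMeasurable.restrict) ?_
      filter_upwards [ae_restrict_mem measurableSet_Ioi] with x hx
      have hx0 : (0:ℝ) < x := lt_trans one_pos hx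
      rw [Real.norm_eq_abs, abs_of_nonneg (hnn x)]; simp only [hf]; rw [abs_of_pos hx0]
      have h1 : (1 - Real.exp (-x^2))^2 ≤ 1 := by
        have hb := one_sub_exp_neg_le_one (sq_nonneg x)
        have hc := one_sub_exp_neg_nonneg (sq_nonneg x)
        nlinarith
      nlinarith [Real.rpow_nonneg hx0.le (-1 - 2*H), h1,
        mul_le_mul_of_nonneg_right h1 (Real.rpow_nonneg hx0.le (-1 - 2*H))]
  -- f x = g |x| with g = f
  have habs : ∀ x : ℝ, f |x| = f x := by
    intro x
    simp only [hf, abs_abs, sq_abs]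
  have hIic : IntegrableOn f (Iic 0) := by
    have : IntegrableOn (fun x => f |x|) (Iic 0) := by
      rw [← Measure.map_neg_eq_self (volume : Measure ℝ)]
      have m : MeasurableEmbedding fun x : ℝ => -x := (Homeomorph.neg ℝ).measurableEmbedding
      rw [m.integrableOn_map_iff]
      simp_rw [Function.comp_def, abs_neg, neg_preimage, neg_Iic, neg_zero]
      exact Iff.mpr integrableOn_Ici_iff_integrableOn_Ioi
        ((hIoi.congr_fun (fun x hx => (habs x).symm) measurableSet_Ioi))
    exact this.congr_fun (fun x _ => habs x) measurableSet_Iic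
  have : IntegrableOn f (Iic 0 ∪ Ioi 0) := hIic.union hIoi
  rwa [Iic_union_Ioi, integrableOn_univ] at this


section part2
variable {H : ℝ}

lemma scaling_aux (h0 : 0 < H) (h2 : H ≤ 1/2) {τ : ℝ} (hτ : 0 < τ) :
    Integrable (fun ξ : ℝ => (1 - Real.exp (-(τ * ξ^2)))^2 * |ξ| ^ (-1 - 2*H)) ∧
    ∫ ξ : ℝ, (1 - Real.exp (-(τ * ξ^2)))^2 * |ξ| ^ (-1 - 2*H)
      = τ ^ H * ∫ u : ℝ, (1 - Real.exp (-u^2))^2 * |u| ^ (-1 - 2*H) := by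
  set f : ℝ → ℝ := fun u => (1 - Real.exp (-u^2))^2 * |u| ^ (-1 - 2*H) with hf
  have hfint : Integrable f := integrable_aux H h0 h2
  set a : ℝ := τ ^ ((1:ℝ)/2) with haa
  have ha : 0 < a := Real.rpow_pos_of_pos hτ _
  have ha2 : a ^ 2 = τ := by
    rw [haa, ← Real.rpow_natCast (τ ^ ((1:ℝ)/2)) 2, ← Real.rpow_mul hτ.le]
    norm_num
  have hcomp : ∀ ξ : ℝ, f (a * ξ)
      = a ^ (-1 - 2*H) * ((1 - Real.exp (-(τ * ξ^2)))^2 * |ξ| ^ (-1 - 2*H)) := by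
    intro ξ
    have h1 : (a * ξ)^2 = τ * ξ^2 := by rw [mul_pow, ha2]
    have h2' : |a * ξ| ^ (-1 - 2*H) = a ^ (-1 - 2*H) * |ξ| ^ (-1 - 2*H) := by
      rw [abs_mul, abs_of_pos ha, Real.mul_rpow ha.le (abs_nonneg _)]
    simp only [hf, h1, h2']
    ring
  have hpow : a ^ (1 + 2*H) * a ^ (-1 - 2*H) = 1 := by
    rw [← Real.rpow_add ha]; norm_num
  have hint2 : Integrable (fun ξ : ℝ => f (a * ξ)) := hfint.comp_mul_left' ha.ne'
  have heq : (fun ξ : ℝ => (1 - Real.exp (-(τ * ξ^2)))^2 * |ξ| ^ (-1 - 2*H))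
      = fun ξ : ℝ => a ^ (1 + 2*H) * f (a * ξ) := by
    funext ξ
    rw [hcomp ξ, ← mul_assoc, hpow, one_mul]
  constructor
  · rw [heq]; exact hint2.const_mul _
  · rw [heq]
    rw [integral_const_mul]
    rw [MeasureTheory.Measure.integral_comp_mul_left f a]
    rw [abs_of_pos (inv_pos.mpr ha), smul_eq_mul, ← mul_assoc]
    congr 1
    rw [← Real.rpow_neg_one a, ← Real.rpow_add ha, haa, ← Real.rpow_mul hτ.le]
    congr 1
    ring

/-- the temporal-increment integral bound
`∫_ℝ ((1−e^{−2sξ²})/(2ξ²)) (1−e^{−(t−s)ξ²})² |ξ|^{1−2H} dξ ≤ c_{2,H} (t−s)^H`, where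
`c_{2,H} = (1/2)∫_ℝ (1−e^{−u²})² |u|^{−1−2H} du < ∞`. -/
theorem stmt12 (H : ℝ) (hH : H ∈ Set.Ioc (0:ℝ) (1/2)) (s t : ℝ) (hs : 0 ≤ s) (hst : s ≤ t) :
    Integrable (fun u : ℝ => (1 - Real.exp (-u^2))^2 * |u| ^ (-1 - 2*H)) ∧
    ∫⁻ ξ : ℝ, ENNReal.ofReal
        ((1 - Real.exp (-(2 * s * ξ^2))) / (2 * ξ^2) *
          (1 - Real.exp (-((t - s) * ξ^2)))^2 * |ξ| ^ (1 - 2*H)) ≤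
      ENNReal.ofReal
        ((1/2 * ∫ u : ℝ, (1 - Real.exp (-u^2))^2 * |u| ^ (-1 - 2*H)) * (t - s) ^ H) := by
  obtain ⟨h0, h2⟩ := hH
  refine ⟨integrable_aux H h0 h2, ?_⟩
  rcases eq_or_lt_of_le (sub_nonneg.mpr hst) with hz | hpos
  · -- t - s = 0
    have hzero : ∀ ξ : ℝ, ((1 - Real.exp (-(2 * s * ξ^2))) / (2 * ξ^2) *
          (1 - Real.exp (-((t - s) * ξ^2)))^2 * |ξ| ^ (1 - 2*H)) = 0 := by
      intro ξ
      rw [← hz]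
      simp
    simp only [hzero, ENNReal.ofReal_zero, lintegral_zero]
    exact zero_le
  · set τ := t - s with hτdef
    obtain ⟨hint, hval⟩ := scaling_aux h0 h2 hpos
    have hpt : ∀ ξ : ℝ,
        ENNReal.ofReal ((1 - Real.exp (-(2 * s * ξ^2))) / (2 * ξ^2) *
          (1 - Real.exp (-(τ * ξ^2)))^2 * |ξ| ^ (1 - 2*H)) ≤
        ENNReal.ofReal (1/2 * ((1 - Real.exp (-(τ * ξ^2)))^2 * |ξ| ^ (-1 - 2*H))) := by
      intro ξ
      apply ENNReal.ofReal_le_ofReal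
      by_cases hξ : ξ = 0
      · subst hξ
        simp
      · have hξ2 : (0:ℝ) < ξ^2 := by positivity
        have habs : (0:ℝ) < |ξ| := abs_pos.mpr hξ
        have hM : (0:ℝ) ≤ (1 - Real.exp (-(τ * ξ^2)))^2 := sq_nonneg _
        have h1 : 1 - Real.exp (-(2 * s * ξ^2)) ≤ 1 :=
          one_sub_exp_neg_le_one (by positivity)
        have hE : |ξ| ^ (1 - 2*H) = ξ^2 * |ξ| ^ (-1 - 2*H) := by
          rw [show (1 - 2*H) = 2 + (-1 - 2*H) by ring, Real.rpow_add habs]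
          congr 1
          rw [show (2:ℝ) = ((2:ℕ):ℝ) by norm_num, Real.rpow_natCast, sq_abs]
        calc (1 - Real.exp (-(2 * s * ξ^2))) / (2 * ξ^2) *
              (1 - Real.exp (-(τ * ξ^2)))^2 * |ξ| ^ (1 - 2*H)
            ≤ 1 / (2 * ξ^2) * (1 - Real.exp (-(τ * ξ^2)))^2 * |ξ| ^ (1 - 2*H) := by
              apply mul_le_mul_of_nonneg_right _ (Real.rpow_nonneg (abs_nonneg _) _)
              apply mul_le_mul_of_nonneg_right _ hM
              exact div_le_div_of_nonneg_right h1 (by positivity) |>.trans_eq rfl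
          _ = 1/2 * ((1 - Real.exp (-(τ * ξ^2)))^2 * |ξ| ^ (-1 - 2*H)) := by
              rw [hE]
              field_simp
    calc ∫⁻ ξ : ℝ, ENNReal.ofReal ((1 - Real.exp (-(2 * s * ξ^2))) / (2 * ξ^2) *
          (1 - Real.exp (-(τ * ξ^2)))^2 * |ξ| ^ (1 - 2*H))
        ≤ ∫⁻ ξ : ℝ, ENNReal.ofReal
            (1/2 * ((1 - Real.exp (-(τ * ξ^2)))^2 * |ξ| ^ (-1 - 2*H))) :=
          lintegral_mono fun ξ => hpt ξ
      _ = ENNReal.ofReal (∫ ξ : ℝ, 1/2 * ((1 - Real.exp (-(τ * ξ^2)))^2 * |ξ| ^ (-1 - 2*H))) := by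
          rw [MeasureTheory.ofReal_integral_eq_lintegral_ofReal (hint.const_mul _)]
          filter_upwards with ξ
          positivity
      _ = ENNReal.ofReal ((1/2 * ∫ u : ℝ, (1 - Real.exp (-u^2))^2 * |u| ^ (-1 - 2*H)) * τ ^ H) := by
          rw [integral_const_mul, hval]
          congr 1
          ring
end part2
end

section
/- For every H ∈ (0,1/2), every s ≥ 0 and every a ∈ ℝ, ∫_ℝ ((1 − exp(−2 s ξ²)) / (2 ξ²)) · (1 − cos(a ξ)) · |ξ|^{1−2H} dξ ≤ c_{3,H} |a|^{2H}, where c_{3,H} = ∫₀^∞ (1 − cos x) x^{−1−2H} dx = (2H)^{−1} Γ(1−2H) cos(Hπ). -/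
open MeasureTheory Real Set

section Stmt13Aux
open Filter Topology


lemma aux_int_rpow_exp {b r : ℝ} (hb : 0 < b) (hr : 0 < r) :
    IntegrableOn (fun t : ℝ => t ^ (b-1) * Real.exp (-(r*t))) (Ioi 0) := by
  have base : IntegrableOn (fun x : ℝ => Real.exp (-x) * x ^ (b-1)) (Ioi 0) :=
    Real.GammaIntegral_convergent hb
  have h1 : IntegrableOn (fun t : ℝ => Real.exp (-(r*t)) * (r*t) ^ (b-1)) (Ioi 0) := by
    have := (integrableOn_Ioi_comp_mul_left_iff
      (fun x : ℝ => Real.exp (-x) * x ^ (b-1)) 0 hr).mpr (by simpa using base)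
    simpa using this
  have h2 := h1.const_mul (r ^ (1-b))
  refine (IntegrableOn.congr_fun h2 ?_ measurableSet_Ioi)
  intro t ht
  have ht0 : (0:ℝ) < t := ht
  simp only
  rw [Real.mul_rpow hr.le ht0.le]
  rw [show r ^ (1-b) * (Real.exp (-(r*t)) * (r ^ (b-1) * t ^ (b-1)))
      = (r ^ (1-b) * r ^ (b-1)) * (t ^ (b-1) * Real.exp (-(r*t))) by ring,
    ← Real.rpow_add hr]
  norm_num

lemma aux_lint_rpow_exp {b r : ℝ} (hb : 0 < b) (hr : 0 < r) :
    ∫⁻ t in Ioi (0:ℝ), ENNReal.ofReal (t ^ (b-1) * Real.exp (-(r*t)))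
      = ENNReal.ofReal ((1/r) ^ b * Real.Gamma b) := by
  rw [← Real.integral_rpow_mul_exp_neg_mul_Ioi hb hr,
    ← ofReal_integral_eq_lintegral_ofReal (aux_int_rpow_exp hb hr)]
  filter_upwards [ae_restrict_mem measurableSet_Ioi] with t ht
  have : (0:ℝ) < t := ht
  positivity

lemma aux_lint_exp {r : ℝ} (hr : 0 < r) :
    ∫⁻ u in Ioi (0:ℝ), ENNReal.ofReal (Real.exp (-(r*u))) = ENNReal.ofReal (1/r) := by
  have := aux_lint_rpow_exp one_pos hr
  simp only [sub_self, Real.rpow_zero, one_mul, Real.rpow_one, Real.Gamma_one, mul_one] at this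
  exact this

lemma aux_int_cos_exp {t : ℝ} (ht : 0 < t) :
    IntegrableOn (fun x : ℝ => (1 - Real.cos x) * Real.exp (-(t*x))) (Ioi 0) := by
  have base : IntegrableOn (fun x : ℝ => Real.exp (-t*x)) (Ioi 0) :=
    exp_neg_integrableOn_Ioi 0 ht
  refine (base.const_mul 2).mono' ?_ ?_
  · apply AEStronglyMeasurable.mul
    · exact (continuous_const.sub Real.continuous_cos).aestronglyMeasurable
    · exact (Real.continuous_exp.comp (continuous_const.mul continuous_id).neg).aestronglyMeasurable
  · filter_upwards with x
    have h1 : |1 - Real.cos x| ≤ 2 := by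
      have := Real.neg_one_le_cos x
      have := Real.cos_le_one x
      rw [abs_le]; constructor <;> linarith
    have h2 : (0:ℝ) < Real.exp (-(t*x)) := Real.exp_pos _
    calc ‖(1 - Real.cos x) * Real.exp (-(t*x))‖
        = |1 - Real.cos x| * Real.exp (-(t*x)) := by
          rw [norm_mul, Real.norm_eq_abs, Real.norm_eq_abs, abs_of_pos h2]
      _ ≤ 2 * Real.exp (-(t*x)) := by nlinarith
      _ = 2 * Real.exp (-t*x) := by ring_nf

lemma aux_J {t : ℝ} (ht : 0 < t) :
    ∫ x in Ioi (0:ℝ), (1 - Real.cos x) * Real.exp (-(t*x)) = 1/t - t/(1+t^2) := by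
  have h1t : (0:ℝ) < 1 + t^2 := by positivity
  set F : ℝ → ℝ := fun x => -(Real.exp (-(t*x))/t) -
      Real.exp (-(t*x)) * (Real.sin x - t * Real.cos x)/(1+t^2) with hF
  have hderiv : ∀ x ∈ Ici (0:ℝ), HasDerivAt F ((1 - Real.cos x) * Real.exp (-(t*x))) x := by
    intro x _
    have hE : HasDerivAt (fun x : ℝ => Real.exp (-(t*x))) (Real.exp (-(t*x)) * (-t)) x := by
      have h0 : HasDerivAt (fun x : ℝ => -(t*x)) (-t) x := by
        exact ((hasDerivAt_id' x).const_mul t).neg.congr_deriv (by ring)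
      exact h0.exp
    have hS : HasDerivAt (fun x : ℝ => Real.sin x - t * Real.cos x)
        (Real.cos x + t * Real.sin x) x := by
      have := (Real.hasDerivAt_sin x).sub ((Real.hasDerivAt_cos x).const_mul t)
      exact this.congr_deriv (by ring)
    have h2 : HasDerivAt (fun x => Real.exp (-(t*x)) * (Real.sin x - t * Real.cos x))
        (Real.exp (-(t*x)) * (-t) * (Real.sin x - t * Real.cos x)
          + Real.exp (-(t*x)) * (Real.cos x + t * Real.sin x)) x := hE.mul hS
    have := ((hE.div_const t).neg).sub (h2.div_const (1+t^2))
    refine this.congr_deriv ?_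
    field_simp
    ring
  have htend : Tendsto F atTop (𝓝 0) := by
    have hexp : Tendsto (fun x : ℝ => Real.exp (-(t*x))) atTop (𝓝 0) := by
      apply Real.tendsto_exp_atBot.comp
      exact tendsto_neg_atBot_iff.mpr (((tendsto_const_mul_atTop_of_pos ht).mpr tendsto_id))
    have h1 : Tendsto (fun x : ℝ => -Real.exp (-(t*x))/t) atTop (𝓝 0) := by
      simpa using (hexp.neg.div_const t)
    have h2 : Tendsto (fun x : ℝ => Real.exp (-(t*x)) * (Real.sin x - t * Real.cos x)/(1+t^2))
        atTop (𝓝 0) := by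
      apply squeeze_zero_norm (fun x => ?_) (by simpa using (hexp.const_mul ((1+|t|)/(1+t^2))))
      have hb : |Real.sin x - t * Real.cos x| ≤ 1 + |t| := by
        calc |Real.sin x - t * Real.cos x| ≤ |Real.sin x| + |t * Real.cos x| := abs_sub _ _
          _ ≤ 1 + |t| := by
            have := Real.abs_sin_le_one x
            have := Real.abs_cos_le_one x
            have : |t * Real.cos x| ≤ |t| := by
              rw [abs_mul]
              nlinarith [abs_nonneg t, Real.abs_cos_le_one x]
            linarith [Real.abs_sin_le_one x]
      have hE := (Real.exp_pos (-(t*x))).le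
      rw [Real.norm_eq_abs, abs_div, abs_mul, abs_of_nonneg hE, abs_of_pos h1t]
      rw [div_le_iff₀ h1t] at *
      calc Real.exp (-(t*x)) * |Real.sin x - t * Real.cos x|
          ≤ Real.exp (-(t*x)) * (1+|t|) := by nlinarith
        _ = (1+|t|)/(1+t^2) * Real.exp (-(t*x)) * (1+t^2) := by field_simp
    have := h1.sub h2
    simpa [hF, neg_div, sub_eq_add_neg] using this
  have := integral_Ioi_of_hasDerivAt_of_tendsto' hderiv (aux_int_cos_exp ht) htend
  rw [this, hF]
  simp only [mul_zero, neg_zero, Real.sin_zero, Real.cos_zero, Real.exp_zero]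
  field_simp
  ring

lemma aux_sq_congr' {s u : ℝ} {x : ℝ} (hx0 : (0:ℝ) < x) :
    x ^ ((2:ℝ) - 1) • ((x ^ (2:ℝ)) ^ (s/2-1) * Real.exp (-(u * x ^ (2:ℝ))))
      = x ^ (s-1) * Real.exp (-(u*x^2)) := by
  have hx2 : x ^ (2:ℝ) = x ^ 2 := by
    rw [show (2:ℝ) = ((2:ℕ):ℝ) by norm_num, Real.rpow_natCast]
  have h1 : (x ^ (2:ℝ)) ^ (s/2-1) = x ^ (s-2) := by
    rw [← Real.rpow_mul hx0.le]; congr 1; ring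
  have h2 : x ^ ((2:ℝ)-1) = x := by norm_num
  have h3 : x * x ^ (s-2) = x ^ (s-1) := by
    nth_rewrite 1 [← Real.rpow_one x]
    rw [← Real.rpow_add hx0]; congr 1; ring
  rw [smul_eq_mul, h1, h2, hx2, ← h3]; ring

lemma aux_sq_congr {s u : ℝ} {x : ℝ} (hx0 : (0:ℝ) < x) :
    (|2| * x ^ ((2:ℝ) - 1)) • ((x ^ (2:ℝ)) ^ (s/2-1) * Real.exp (-(u * x ^ (2:ℝ))))
      = 2 * (x ^ (s-1) * Real.exp (-(u*x^2))) := by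
  rw [smul_eq_mul, abs_two, mul_assoc, ← smul_eq_mul (a := x ^ ((2:ℝ)-1)), aux_sq_congr' hx0]

lemma aux_H5 {s u : ℝ} (hs : 0 < s) (hu : 0 < u) :
    ∫ t in Ioi (0:ℝ), t ^ (s-1) * Real.exp (-(u*t^2))
      = (1/2) * ((1/u) ^ (s/2) * Real.Gamma (s/2)) := by
  have key := integral_comp_rpow_Ioi (fun y : ℝ => y ^ (s/2-1) * Real.exp (-(u*y)))
    (p := 2) two_ne_zero
  rw [setIntegral_congr_fun measurableSet_Ioi
      (fun x hx => aux_sq_congr (show (0:ℝ) < x from hx) (u := u) (s := s)),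
    MeasureTheory.integral_const_mul,
    Real.integral_rpow_mul_exp_neg_mul_Ioi (by positivity : 0 < s/2) hu] at key
  linarith

lemma aux_H6 {s u : ℝ} (hs : 0 < s) (hu : 0 < u) :
    IntegrableOn (fun t : ℝ => t ^ (s-1) * Real.exp (-(u*t^2))) (Ioi 0) := by
  have base := aux_int_rpow_exp (show 0 < s/2 by positivity) hu
  have := (integrableOn_Ioi_comp_rpow_iff'
    (fun y : ℝ => y ^ (s/2-1) * Real.exp (-(u*y))) (p := 2) two_ne_zero).mpr base
  refine IntegrableOn.congr_fun this (fun x hx => ?_) measurableSet_Ioi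
  exact aux_sq_congr' (show (0:ℝ) < x from hx)

lemma aux_pull {c : ℝ} (hc : 0 ≤ c) (f : ℝ → ℝ) (μ : Measure ℝ) :
    ∫⁻ x, ENNReal.ofReal (c * f x) ∂μ
      = ENNReal.ofReal c * ∫⁻ x, ENNReal.ofReal (f x) ∂μ := by
  simp_rw [ENNReal.ofReal_mul hc]
  exact lintegral_const_mul' _ _ ENNReal.ofReal_ne_top

lemma aux_LM {s : ℝ} (hs : 0 < s) (hs1 : s < 1) :
    ∫⁻ t in Ioi (0:ℝ), ENNReal.ofReal (t ^ (s-1) / (1+t^2))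
      = ENNReal.ofReal (Real.Gamma (s/2) * Real.Gamma (1-s/2) / 2) := by
  have step1 : ∫⁻ t in Ioi (0:ℝ), ENNReal.ofReal (t ^ (s-1) / (1+t^2))
      = ∫⁻ t in Ioi (0:ℝ), ∫⁻ u in Ioi (0:ℝ),
          ENNReal.ofReal (t ^ (s-1) * Real.exp (-((1+t^2)*u))) := by
    refine setLIntegral_congr_fun measurableSet_Ioi ?_
    intro t ht
    dsimp only
    have ht0 : (0:ℝ) < t := ht
    have h1t : (0:ℝ) < 1 + t^2 := by positivity
    rw [aux_pull (Real.rpow_nonneg ht0.le _) _ _, aux_lint_exp h1t,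
      ← ENNReal.ofReal_mul (Real.rpow_nonneg ht0.le _), mul_one_div]
  rw [step1, lintegral_lintegral_swap (by
    apply Measurable.aemeasurable; fun_prop)]
  have step2 : ∀ u ∈ Ioi (0:ℝ),
      ∫⁻ t in Ioi (0:ℝ), ENNReal.ofReal (t ^ (s-1) * Real.exp (-((1+t^2)*u)))
        = ENNReal.ofReal ((Real.Gamma (s/2) / 2) * (u ^ ((1-s/2)-1) * Real.exp (-(1*u)))) := by
    intro u hu
    have hu0 : (0:ℝ) < u := hu
    have e1 : ∫⁻ t in Ioi (0:ℝ), ENNReal.ofReal (t ^ (s-1) * Real.exp (-((1+t^2)*u)))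
        = ∫⁻ t in Ioi (0:ℝ),
            ENNReal.ofReal (Real.exp (-u) * (t ^ (s-1) * Real.exp (-(u*t^2)))) := by
      refine setLIntegral_congr_fun measurableSet_Ioi ?_
      intro t _
      dsimp only
      rw [show Real.exp (-u) * (t ^ (s-1) * Real.exp (-(u*t^2)))
          = t ^ (s-1) * (Real.exp (-u) * Real.exp (-(u*t^2))) by ring, ← Real.exp_add]
      congr 2
      ring
    rw [e1, aux_pull (Real.exp_nonneg _) _ _,
      ← ofReal_integral_eq_lintegral_ofReal (aux_H6 hs hu0) (by
        filter_upwards [ae_restrict_mem measurableSet_Ioi] with t ht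
        have : (0:ℝ) < t := ht
        positivity),
      aux_H5 hs hu0, ← ENNReal.ofReal_mul (Real.exp_nonneg _)]
    congr 1
    have h2 : (1/u) ^ (s/2) = u ^ (-(s/2)) := by
      rw [one_div, ← Real.rpow_neg_one u, ← Real.rpow_mul hu0.le]
      congr 1; ring
    have h3 : ((1:ℝ)-s/2)-1 = -(s/2) := by ring
    rw [h2, h3]
    ring_nf
  rw [setLIntegral_congr_fun measurableSet_Ioi step2,
    aux_pull (by positivity) _ _, aux_lint_rpow_exp (by linarith : 0 < 1 - s/2) one_pos,
    ← ENNReal.ofReal_mul (by positivity)]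
  congr 1
  simp only [one_div, inv_one, Real.one_rpow, one_mul]
  ring

lemma aux_Lc {s : ℝ} (hs : 0 < s) (hs1 : s < 1) :
    ∫⁻ x in Ioi (0:ℝ), ENNReal.ofReal ((1 - Real.cos x) * x ^ (-1-s))
      = ENNReal.ofReal (Real.Gamma (s/2) * Real.Gamma (1-s/2) / (2 * Real.Gamma (1+s))) := by
  have hG : 0 < Real.Gamma (1+s) := Real.Gamma_pos_of_pos (by linarith)
  have step1 : ∫⁻ x in Ioi (0:ℝ), ENNReal.ofReal ((1 - Real.cos x) * x ^ (-1-s))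
      = ∫⁻ x in Ioi (0:ℝ), ∫⁻ t in Ioi (0:ℝ),
          ENNReal.ofReal (((1 - Real.cos x) * (Real.Gamma (1+s))⁻¹)
            * (t ^ ((1+s)-1) * Real.exp (-(x*t)))) := by
    refine setLIntegral_congr_fun measurableSet_Ioi ?_
    intro x hx
    dsimp only
    have hx0 : (0:ℝ) < x := hx
    have hc : 0 ≤ (1 - Real.cos x) * (Real.Gamma (1+s))⁻¹ := by
      have h0 : 0 ≤ 1 - Real.cos x := by linarith [Real.cos_le_one x]
      positivity
    rw [aux_pull hc _ _, aux_lint_rpow_exp (by linarith : (0:ℝ) < 1+s) hx0,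
      ← ENNReal.ofReal_mul hc]
    congr 1
    have h2 : (1/x) ^ (1+s) = x ^ (-1-s) := by
      rw [one_div, ← Real.rpow_neg_one x, ← Real.rpow_mul hx0.le]
      congr 1; ring
    rw [h2]
    field_simp
  rw [step1, lintegral_lintegral_swap (by apply Measurable.aemeasurable; fun_prop)]
  have step2 : ∀ t ∈ Ioi (0:ℝ),
      ∫⁻ x in Ioi (0:ℝ), ENNReal.ofReal (((1 - Real.cos x) * (Real.Gamma (1+s))⁻¹)
          * (t ^ ((1+s)-1) * Real.exp (-(x*t))))
        = ENNReal.ofReal ((Real.Gamma (1+s))⁻¹ * (t ^ (s-1) / (1+t^2))) := by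
    intro t ht
    have ht0 : (0:ℝ) < t := ht
    have h1t : (0:ℝ) < 1 + t^2 := by positivity
    have e1 : ∫⁻ x in Ioi (0:ℝ), ENNReal.ofReal (((1 - Real.cos x) * (Real.Gamma (1+s))⁻¹)
          * (t ^ ((1+s)-1) * Real.exp (-(x*t))))
        = ∫⁻ x in Ioi (0:ℝ), ENNReal.ofReal (((Real.Gamma (1+s))⁻¹ * t ^ s)
            * ((1 - Real.cos x) * Real.exp (-(t*x)))) := by
      refine setLIntegral_congr_fun measurableSet_Ioi ?_
      intro x _
      dsimp only
      congr 1
      rw [show (1+s)-1 = s by ring, show x*t = t*x by ring]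
      ring
    have hc : 0 ≤ (Real.Gamma (1+s))⁻¹ * t ^ s := by positivity
    rw [e1, aux_pull hc _ _,
      ← ofReal_integral_eq_lintegral_ofReal (aux_int_cos_exp ht0) (by
        filter_upwards [ae_restrict_mem measurableSet_Ioi] with x _
        have h0 : 0 ≤ 1 - Real.cos x := by linarith [Real.cos_le_one x]
        positivity),
      aux_J ht0, ← ENNReal.ofReal_mul hc]
    congr 1
    have key : 1/t - t/(1+t^2) = 1/(t*(1+t^2)) := by
      field_simp
      ring
    have h4 : t ^ (s-1) = t ^ s / t := by
      rw [Real.rpow_sub ht0, Real.rpow_one]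
    rw [key, h4]
    field_simp
  rw [setLIntegral_congr_fun measurableSet_Ioi step2,
    aux_pull (by positivity) _ _, aux_LM hs hs1, ← ENNReal.ofReal_mul (by positivity)]
  congr 1
  field_simp

lemma aux_algebra {H : ℝ} (h0 : 0 < H) (h1 : H < 1/2) :
    Real.Gamma H * Real.Gamma (1-H) / (2 * Real.Gamma (1+2*H))
      = (2*H)⁻¹ * Real.Gamma (1 - 2*H) * Real.cos (H * Real.pi) := by
  have A := Real.Gamma_mul_Gamma_one_sub H
  have B := Real.Gamma_mul_Gamma_one_sub (2*H)
  have C : Real.Gamma (1+2*H) = 2*H * Real.Gamma (2*H) := by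
    rw [show (1:ℝ)+2*H = 2*H+1 by ring, Real.Gamma_add_one (by positivity)]
  have hsin : 0 < Real.sin (π*H) :=
    Real.sin_pos_of_pos_of_lt_pi (by positivity) (by nlinarith [Real.pi_pos])
  have hcos : 0 < Real.cos (π*H) := by
    apply Real.cos_pos_of_mem_Ioo
    constructor
    · nlinarith [Real.pi_pos]
    · nlinarith [Real.pi_pos]
  have hs2 : Real.sin (π*(2*H)) = 2*Real.sin (π*H)*Real.cos (π*H) := by
    rw [show π*(2*H) = 2*(π*H) by ring, Real.sin_two_mul]
  have hG2 : 0 < Real.Gamma (2*H) := Real.Gamma_pos_of_pos (by positivity)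
  rw [mul_comm H π, A, C]
  rw [hs2] at B
  have hB : Real.Gamma (1-2*H) = π / (2*Real.sin (π*H)*Real.cos (π*H)) / Real.Gamma (2*H) := by
    field_simp at B ⊢
    linarith [B]
  rw [hB]
  field_simp
lemma aux_part1 {H : ℝ} (h0 : 0 < H) (h1 : H < 1/2) :
    (∫ x in Set.Ioi (0:ℝ), (1 - Real.cos x) * x ^ (-1 - 2*H)) =
      (2*H)⁻¹ * Real.Gamma (1 - 2*H) * Real.cos (H * Real.pi) := by
  have hLc := aux_Lc (s := 2*H) (by linarith) (by linarith)
  rw [show (2*H)/2 = H by ring] at hLc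
  have conv : (∫ x in Set.Ioi (0:ℝ), (1 - Real.cos x) * x ^ (-1 - 2*H))
      = (∫⁻ x in Ioi (0:ℝ), ENNReal.ofReal ((1 - Real.cos x) * x ^ (-1-2*H))).toReal := by
    apply integral_eq_lintegral_of_nonneg_ae
    · filter_upwards [ae_restrict_mem measurableSet_Ioi] with x hx
      have hx0 : (0:ℝ) < x := hx
      have h0c : 0 ≤ 1 - Real.cos x := by linarith [Real.cos_le_one x]
      positivity
    · apply Measurable.aestronglyMeasurable
      fun_prop
  rw [conv, hLc, ENNReal.toReal_ofReal (by
    have := Real.Gamma_pos_of_pos h0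
    have := Real.Gamma_pos_of_pos (show (0:ℝ) < 1-H by linarith)
    have := Real.Gamma_pos_of_pos (show (0:ℝ) < 1+2*H by linarith)
    positivity)]
  exact aux_algebra h0 h1

lemma aux_lintegral_abs (g : ℝ → ENNReal) (hg : Measurable g) :
    ∫⁻ x : ℝ, g |x| = 2 * ∫⁻ x in Ioi (0:ℝ), g x := by
  have hmeas : Measurable fun x : ℝ => g |x| := hg.comp measurable_abs
  rw [← lintegral_add_compl (fun x : ℝ => g |x|) (measurableSet_Ioi (a := (0:ℝ)))]
  have h1 : ∫⁻ x in Ioi (0:ℝ), g |x| = ∫⁻ x in Ioi (0:ℝ), g x := by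
    refine setLIntegral_congr_fun measurableSet_Ioi ?_
    intro x hx
    dsimp only
    rw [abs_of_pos hx]
  have hmap : Measure.map Neg.neg (volume.restrict (Ici (0:ℝ)))
      = volume.restrict (Iic (0:ℝ)) := by
    rw [show volume.restrict (Iic (0:ℝ))
        = (Measure.map Neg.neg (volume : Measure ℝ)).restrict (Iic 0) by
      rw [Measure.map_neg_eq_self]]
    rw [Measure.restrict_map measurable_neg measurableSet_Iic]
    congr 1
    ext x
    simp
  have h2 : ∫⁻ x in (Ioi (0:ℝ))ᶜ, g |x| = ∫⁻ x in Ioi (0:ℝ), g x := by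
    rw [compl_Ioi, ← hmap, lintegral_map hmeas measurable_neg]
    simp_rw [abs_neg]
    rw [show volume.restrict (Ici (0:ℝ)) = volume.restrict (Ioi (0:ℝ)) from
      (Measure.restrict_congr_set Ioi_ae_eq_Ici).symm]
    exact h1
  rw [h1, h2, two_mul]

lemma aux_ptwise {H s a : ℝ} (hH : 0 < H) (hH1 : H < 1/2) (hs : 0 ≤ s) (ξ : ℝ) :
    (1 - Real.exp (-(2 * s * ξ^2))) / (2 * ξ^2) *
          (1 - Real.cos (a * ξ)) * |ξ| ^ (1 - 2*H)
      ≤ (1 - Real.cos (a * |ξ|)) * |ξ| ^ (-1 - 2*H) / 2 := by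
  have hcoseq : Real.cos (a * |ξ|) = Real.cos (a * ξ) := by
    rcases abs_choice ξ with h | h
    · rw [h]
    · rw [h, show a * -ξ = -(a*ξ) by ring, Real.cos_neg]
  rw [hcoseq]
  rcases eq_or_ne ξ 0 with rfl | hξ
  · simp
  · have hξ0 : (0:ℝ) < |ξ| := abs_pos.mpr hξ
    have hsq : (0:ℝ) < ξ^2 := by positivity
    have hcos : 0 ≤ 1 - Real.cos (a*ξ) := by linarith [Real.cos_le_one (a*ξ)]
    have hrp : (0:ℝ) ≤ |ξ| ^ (1-2*H) := Real.rpow_nonneg hξ0.le _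
    have key : |ξ| ^ (1-2*H) / ξ^2 = |ξ| ^ (-1-2*H) := by
      rw [← sq_abs ξ, ← Real.rpow_natCast |ξ| 2, ← Real.rpow_sub hξ0]
      norm_num
      congr 1
      ring
    calc (1 - Real.exp (-(2 * s * ξ^2))) / (2 * ξ^2) *
          (1 - Real.cos (a * ξ)) * |ξ| ^ (1 - 2*H)
        ≤ 1 / (2 * ξ^2) * (1 - Real.cos (a * ξ)) * |ξ| ^ (1 - 2*H) := by
          gcongr
          linarith [Real.exp_nonneg (-(2 * s * ξ^2))]
      _ = (1 - Real.cos (a * ξ)) * (|ξ| ^ (1-2*H) / ξ^2) / 2 := by ring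
      _ = (1 - Real.cos (a * ξ)) * |ξ| ^ (-1 - 2*H) / 2 := by rw [key]

lemma aux_int_g0 {H : ℝ} (h0 : 0 < H) (h1 : H < 1/2) :
    IntegrableOn (fun x : ℝ => (1 - Real.cos x) * x ^ (-1-2*H)) (Ioi 0) := by
  constructor
  · apply Measurable.aestronglyMeasurable; fun_prop
  · rw [hasFiniteIntegral_iff_ofReal (by
      filter_upwards [ae_restrict_mem measurableSet_Ioi] with x hx
      have hx0 : (0:ℝ) < x := hx
      have h0c : 0 ≤ 1 - Real.cos x := by linarith [Real.cos_le_one x]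
      positivity)]
    rw [aux_Lc (s := 2*H) (by linarith) (by linarith)]
    exact ENNReal.ofReal_lt_top

end Stmt13Aux

/-- the spatial-increment integral bound
`∫_ℝ ((1−e^{−2sξ²})/(2ξ²)) (1−cos(aξ)) |ξ|^{1−2H} dξ ≤ c_{3,H} |a|^{2H}`, where
`c_{3,H} = ∫₀^∞ (1−cos x) x^{−1−2H} dx = (2H)⁻¹ Γ(1−2H) cos(Hπ)`. -/
theorem stmt13 (H : ℝ) (hH : H ∈ Set.Ioo (0:ℝ) (1/2)) (s : ℝ) (hs : 0 ≤ s) (a : ℝ) :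
    (∫ x in Set.Ioi (0:ℝ), (1 - Real.cos x) * x ^ (-1 - 2*H)) =
      (2*H)⁻¹ * Real.Gamma (1 - 2*H) * Real.cos (H * Real.pi) ∧
    ∫⁻ ξ : ℝ, ENNReal.ofReal
        ((1 - Real.exp (-(2 * s * ξ^2))) / (2 * ξ^2) *
          (1 - Real.cos (a * ξ)) * |ξ| ^ (1 - 2*H)) ≤
      ENNReal.ofReal
        (((2*H)⁻¹ * Real.Gamma (1 - 2*H) * Real.cos (H * Real.pi)) * |a| ^ (2*H)) := by
  obtain ⟨h0, h1⟩ := hH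
  refine ⟨aux_part1 h0 h1, ?_⟩
  rcases eq_or_ne a 0 with rfl | ha
  · simp
  · set C : ℝ := (2*H)⁻¹ * Real.Gamma (1 - 2*H) * Real.cos (H * Real.pi) with hCdef
    set b : ℝ := |a| with hbdef
    have hb : 0 < b := abs_pos.mpr ha
    set g0 : ℝ → ℝ := fun x => (1 - Real.cos x) * x ^ (-1-2*H) with hg0def
    have hg0 : IntegrableOn g0 (Ioi 0) := aux_int_g0 h0 h1
    have hC : ∫ x in Ioi (0:ℝ), g0 x = C := aux_part1 h0 h1
    set f : ℝ → ℝ := fun x => (1 - Real.cos (a * x)) * x ^ (-1-2*H) / 2 with hfdef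
    have hfeq : ∀ x ∈ Ioi (0:ℝ), b ^ ((1:ℝ)+2*H) / 2 * g0 (b * x) = f x := by
      intro x hx
      have hx0 : (0:ℝ) < x := hx
      have hcos : Real.cos (b * x) = Real.cos (a * x) := by
        rw [hbdef, show |a| * x = |a * x| by rw [abs_mul, abs_of_pos hx0], Real.cos_abs]
      simp only [hg0def, hfdef]
      rw [hcos, Real.mul_rpow hb.le hx0.le,
        show b ^ ((1:ℝ)+2*H) / 2 * ((1 - Real.cos (a*x)) * (b ^ (-1-2*H) * x ^ (-1-2*H)))
          = (b ^ ((1:ℝ)+2*H) * b ^ (-1-2*H)) * ((1 - Real.cos (a*x)) * x ^ (-1-2*H)) / 2 by ring,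
        ← Real.rpow_add hb]
      norm_num
    have hcomp : IntegrableOn (fun x : ℝ => g0 (b * x)) (Ioi 0) :=
      (integrableOn_Ioi_comp_mul_left_iff g0 0 hb).mpr (by simpa using hg0)
    have hf_int : IntegrableOn f (Ioi 0) := by
      refine IntegrableOn.congr_fun (hcomp.const_mul (b ^ ((1:ℝ)+2*H) / 2)) ?_ measurableSet_Ioi
      intro x hx
      exact hfeq x hx
    have hval : ∫ x in Ioi (0:ℝ), g0 (b * x) = b⁻¹ * C := by
      have := integral_comp_mul_left_Ioi g0 0 hb
      simp only [mul_zero, smul_eq_mul] at this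
      rw [this, hC]
    have hf_val : ∫ x in Ioi (0:ℝ), f x = b ^ (2*H) / 2 * C := by
      rw [← setIntegral_congr_fun measurableSet_Ioi hfeq, MeasureTheory.integral_const_mul, hval]
      rw [show b ^ ((1:ℝ)+2*H) / 2 * (b⁻¹ * C) = (b ^ ((1:ℝ)+2*H) * b⁻¹) * C / 2 by ring,
        ← Real.rpow_neg_one b, ← Real.rpow_add hb]
      rw [show (1:ℝ)+2*H + -1 = 2*H by ring]
      ring
    calc ∫⁻ ξ : ℝ, ENNReal.ofReal
            ((1 - Real.exp (-(2 * s * ξ^2))) / (2 * ξ^2) *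
              (1 - Real.cos (a * ξ)) * |ξ| ^ (1 - 2*H))
        ≤ ∫⁻ ξ : ℝ, ENNReal.ofReal (f |ξ|) := by
          refine lintegral_mono fun ξ => ENNReal.ofReal_le_ofReal ?_
          exact aux_ptwise h0 h1 hs ξ
      _ = 2 * ∫⁻ x in Ioi (0:ℝ), ENNReal.ofReal (f x) := by
          refine aux_lintegral_abs (fun x => ENNReal.ofReal (f x)) ?_
          fun_prop
      _ = 2 * ENNReal.ofReal (∫ x in Ioi (0:ℝ), f x) := by
          rw [ofReal_integral_eq_lintegral_ofReal hf_int (by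
            filter_upwards [ae_restrict_mem measurableSet_Ioi] with x hx
            have hx0 : (0:ℝ) < x := hx
            have h0c : 0 ≤ 1 - Real.cos (a*x) := by linarith [Real.cos_le_one (a*x)]
            positivity)]
      _ = ENNReal.ofReal (C * b ^ (2*H)) := by
          rw [hf_val, show (2:ENNReal) = ENNReal.ofReal 2 by simp,
            ← ENNReal.ofReal_mul (by norm_num)]
          congr 1
          ring
      _ = ENNReal.ofReal (C * |a| ^ (2*H)) := rfl
end

section
/- Let F be a measure on the Borel sets of ℝ and ε ∈ (0,1/2] with c(ε)² := ∫_ℝ |λ|^{2ε} F(dλ) < ∞. Then for all t, s ≥ 0 and all x, y ∈ ℝ: ∫_ℝ | exp(iλx − λ²t) − exp(iλy − λ²s) |² F(dλ) ≤ c(ε)² ( 4^{1−ε} |x − y|^{2ε} + |t − s|^{ε} ). -/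
open MeasureTheory Real Set

/-- `min 1 u ≤ u ^ ε` for `u ≥ 0`, `ε ∈ (0,1]`. -/
lemma min_one_le_rpow {u ε : ℝ} (hu : 0 ≤ u) (hε : 0 < ε) (hε1 : ε ≤ 1) :
    min 1 u ≤ u ^ ε := by
  rcases eq_or_lt_of_le hu with h | h
  · simp [← h, Real.zero_rpow hε.ne']
  rcases le_total u 1 with h1 | h1
  · calc min 1 u ≤ u := min_le_right _ _
      _ = u ^ (1:ℝ) := (Real.rpow_one u).symm
      _ ≤ u ^ ε := Real.rpow_le_rpow_of_exponent_ge h h1 hε1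
  · calc min 1 u ≤ 1 := min_le_left _ _
      _ ≤ u ^ ε := Real.one_le_rpow h1 hε.le

/-- interpolation: `min 4 u ≤ 4^(1-ε) * u^ε`. -/
lemma min_four_le {u ε : ℝ} (hu : 0 ≤ u) (hε : 0 < ε) (hε1 : ε ≤ 1) :
    min 4 u ≤ 4 ^ (1-ε) * u ^ ε := by
  rcases le_total u 4 with h | h
  · calc min 4 u ≤ u := min_le_right _ _
      _ = u ^ (1-ε) * u ^ ε := by
          rw [← Real.rpow_add' hu (by norm_num)]; simp
      _ ≤ 4 ^ (1-ε) * u ^ ε :=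
          mul_le_mul_of_nonneg_right
            (Real.rpow_le_rpow hu h (by linarith)) (Real.rpow_nonneg hu ε)
  · calc min 4 u ≤ 4 := min_le_left _ _
      _ = 4 ^ (1-ε) * 4 ^ ε := by
          rw [← Real.rpow_add' (by norm_num) (by norm_num)]; simp
      _ ≤ 4 ^ (1-ε) * u ^ ε :=
          mul_le_mul_of_nonneg_left
            (Real.rpow_le_rpow (by norm_num) h hε.le) (by positivity)
  
lemma sq_rpow (l ε : ℝ) : (l ^ 2) ^ ε = |l| ^ (2*ε) := by
  rw [← sq_abs, ← Real.rpow_natCast |l| 2, ← Real.rpow_mul (abs_nonneg l)]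
  norm_num

lemma exp_lip {a b : ℝ} (ha : 0 ≤ a) (hb : 0 ≤ b) :
    |Real.exp (-a) - Real.exp (-b)| ≤ min 1 |a - b| := by
  wlog hab : a ≤ b generalizing a b
  · rw [abs_sub_comm, abs_sub_comm a b]; exact this hb ha (le_of_not_ge hab)
  have h1 : Real.exp (-b) ≤ Real.exp (-a) := Real.exp_le_exp.2 (by linarith)
  have h2 : Real.exp (-a) ≤ 1 := Real.exp_le_one_iff.2 (by linarith)
  have h3 : 0 < Real.exp (-b) := Real.exp_pos _
  have h4 : (a - b) + 1 ≤ Real.exp (a - b) := Real.add_one_le_exp _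
  have h5 : Real.exp (-a) * Real.exp (a - b) = Real.exp (-b) := by
    rw [← Real.exp_add]; ring_nf
  rw [abs_of_nonneg (by linarith), abs_of_nonpos (by linarith), le_min_iff]
  constructor
  · have := (Real.exp_pos (-a)).le; linarith
  · nlinarith [Real.exp_pos (a - b)]

/-- exact identity for the modulus of a difference of scaled unit complex exponentials. -/
lemma key_id (p q a b : ℝ) :
    ‖(p:ℂ) * Complex.exp (a * Complex.I) -
        (q:ℂ) * Complex.exp (b * Complex.I)‖ ^ 2
      = (p - q) ^ 2 + 2 * p * q * (1 - Real.cos (a - b)) := by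
  rw [Complex.sq_norm, Complex.normSq_apply]
  simp [Complex.exp_mul_I, Real.cos_sub, Complex.cos_ofReal_re, Complex.sin_ofReal_re]
  linear_combination p^2 * Real.sin_sq_add_cos_sq a + q^2 * Real.sin_sq_add_cos_sq b

lemma pointwise (ε : ℝ) (hε : ε ∈ Set.Ioc (0:ℝ) (1/2)) (t s : ℝ) (ht : 0 ≤ t) (hs : 0 ≤ s)
    (x y l : ℝ) :
    ‖Complex.exp (Complex.I * l * x - (l:ℂ)^2 * t) -
        Complex.exp (Complex.I * l * y - (l:ℂ)^2 * s)‖ ^ 2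
      ≤ |l| ^ (2*ε) * (4 ^ (1 - ε) * |x - y| ^ (2*ε) + |t - s| ^ ε) := by
  obtain ⟨hε0, hε1⟩ := hε
  have hε1' : ε ≤ 1 := by linarith
  have e1 : Complex.exp (Complex.I * l * x - (l:ℂ)^2 * t)
      = (Real.exp (-(l^2*t)) : ℂ) * Complex.exp ((l*x : ℝ) * Complex.I) := by
    rw [Complex.ofReal_exp, ← Complex.exp_add]
    push_cast; ring_nf
  have e2 : Complex.exp (Complex.I * l * y - (l:ℂ)^2 * s)
      = (Real.exp (-(l^2*s)) : ℂ) * Complex.exp ((l*y : ℝ) * Complex.I) := by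
    rw [Complex.ofReal_exp, ← Complex.exp_add]
    push_cast; ring_nf
  rw [e1, e2, key_id]
  set p := Real.exp (-(l^2*t)) with hp
  set q := Real.exp (-(l^2*s)) with hq
  have hp1 : p ≤ 1 := Real.exp_le_one_iff.2 (neg_nonpos.2 (mul_nonneg (sq_nonneg l) ht))
  have hq1 : q ≤ 1 := Real.exp_le_one_iff.2 (neg_nonpos.2 (mul_nonneg (sq_nonneg l) hs))
  have hp0 : 0 < p := Real.exp_pos _
  have hq0 : 0 < q := Real.exp_pos _
  -- first term
  have hA : (p - q) ^ 2 ≤ |l| ^ (2*ε) * |t - s| ^ ε := by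
    have hd : |p - q| ≤ min 1 (l^2 * |t - s|) := by
      have := exp_lip (a := l^2*t) (b := l^2*s) (by positivity) (by positivity)
      have h' : |l^2*t - l^2*s| = l^2 * |t - s| := by
        rw [show l^2*t - l^2*s = l^2*(t-s) by ring, abs_mul, abs_of_nonneg (sq_nonneg l)]
      rw [← h']; exact this
    have hd1 : |p - q| ≤ 1 := hd.trans (min_le_left _ _)
    have hd2 : |p - q| ≤ l^2 * |t - s| := hd.trans (min_le_right _ _)
    have hsq : (p - q)^2 ≤ min 1 (l^2 * |t - s|) := by
      rw [sq_abs (p - q) |>.symm, sq]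
      rcases le_min_iff.1 hd with ⟨h1, h2⟩
      rw [le_min_iff]
      constructor
      · nlinarith [abs_nonneg (p - q)]
      · nlinarith [abs_nonneg (p - q)]
    calc (p - q)^2 ≤ min 1 (l^2 * |t - s|) := hsq
      _ ≤ (l^2 * |t - s|) ^ ε := min_one_le_rpow (by positivity) hε0 hε1'
      _ = |l| ^ (2*ε) * |t - s| ^ ε := by
          rw [Real.mul_rpow (sq_nonneg l) (abs_nonneg _), sq_rpow]
  -- second term
  have hB : 2 * p * q * (1 - Real.cos (l*x - l*y))
      ≤ |l| ^ (2*ε) * (4 ^ (1 - ε) * |x - y| ^ (2*ε)) := by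
    have hcos : 2 * (1 - Real.cos (l*x - l*y)) ≤ min 4 ((l*(x-y))^2) := by
      have h1 : Real.cos (l*x - l*y) = Real.cos (l*(x-y)) := by ring_nf
      rw [h1, le_min_iff]
      constructor
      · nlinarith [Real.neg_one_le_cos (l*(x-y))]
      · nlinarith [Real.one_sub_sq_div_two_le_cos (x := l*(x-y))]
    have hpq : 2 * p * q * (1 - Real.cos (l*x - l*y))
        ≤ 2 * (1 - Real.cos (l*x - l*y)) := by
      have hc : 0 ≤ 1 - Real.cos (l*x - l*y) := by
        nlinarith [Real.cos_le_one (l*x - l*y)]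
      have hpq1 : p * q ≤ 1 := by nlinarith
      nlinarith [mul_nonneg (sub_nonneg.2 hpq1) hc]
    calc 2 * p * q * (1 - Real.cos (l*x - l*y))
        ≤ min 4 ((l*(x-y))^2) := hpq.trans hcos
      _ ≤ 4 ^ (1-ε) * ((l*(x-y))^2) ^ ε := min_four_le (sq_nonneg _) hε0 hε1'
      _ = |l| ^ (2*ε) * (4 ^ (1 - ε) * |x - y| ^ (2*ε)) := by
          rw [sq_rpow, abs_mul, Real.mul_rpow (abs_nonneg l) (abs_nonneg _)]
          ring
  linarith

/-- if `c(ε)² = ∫_ℝ |λ|^{2ε} F(dλ) < ∞` for some `ε ∈ (0,1/2]`, then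
`∫_ℝ |exp(iλx − λ²t) − exp(iλy − λ²s)|² F(dλ) ≤ c(ε)² (4^{1−ε}|x−y|^{2ε} + |t−s|^ε)`. -/
theorem stmt15 (F : Measure ℝ) (ε : ℝ) (hε : ε ∈ Set.Ioc (0:ℝ) (1/2))
    (hF : Integrable (fun l : ℝ => |l| ^ (2*ε)) F) :
    ∀ t s : ℝ, 0 ≤ t → 0 ≤ s → ∀ x y : ℝ,
      ∫⁻ l : ℝ, ENNReal.ofReal
          (‖Complex.exp (Complex.I * l * x - (l:ℂ)^2 * t) -
            Complex.exp (Complex.I * l * y - (l:ℂ)^2 * s)‖ ^ 2) ∂F ≤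
        ENNReal.ofReal ((∫ l : ℝ, |l| ^ (2*ε) ∂F) *
          (4 ^ (1 - ε) * |x - y| ^ (2*ε) + |t - s| ^ ε)) := by
  intro t s ht hs x y
  set C : ℝ := 4 ^ (1 - ε) * |x - y| ^ (2*ε) + |t - s| ^ ε with hC
  have hC0 : 0 ≤ C := by positivity
  calc ∫⁻ l : ℝ, ENNReal.ofReal
          (‖Complex.exp (Complex.I * l * x - (l:ℂ)^2 * t) -
            Complex.exp (Complex.I * l * y - (l:ℂ)^2 * s)‖ ^ 2) ∂F
      ≤ ∫⁻ l : ℝ, ENNReal.ofReal (|l| ^ (2*ε) * C) ∂F := by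
        refine lintegral_mono fun l => ENNReal.ofReal_le_ofReal ?_
        exact pointwise ε hε t s ht hs x y l
    _ = ENNReal.ofReal (∫ l : ℝ, |l| ^ (2*ε) * C ∂F) := by
        rw [← ofReal_integral_eq_lintegral_ofReal (hF.mul_const C)
          (ae_of_all _ fun l => mul_nonneg (Real.rpow_nonneg (abs_nonneg l) _) hC0)]
    _ = ENNReal.ofReal ((∫ l : ℝ, |l| ^ (2*ε) ∂F) * C) := by
        rw [integral_mul_const]
end
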